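/- Let G be a quasi 5-connected graph on at least 8 vertices. Suppose there is a vertex x of degree 4 with N_G(x) = {x₁, x₂, x₃, x₄} such that {x₁, x₂, x₃} induces a triangle in G. Then the edge x x₄ is quasi 5-contractible. -/

import Mathlib

open SimpleGraph Set

variable {V : Type*}

/-- `G` is `k`-connected: more than `k` vertices and removing fewer than `k`
vertices leaves a connected graph. -/
def IsKConnected (k : ℕ) [Fintype V] (G : SimpleGraph V) : Prop :=
  k + 1 ≤ Fintype.card V ∧
    ∀ S : Set V, S.ncard < k → (G.induce Sᶜ).Connected

/-- Contraction of the edge `xy`: identify `y` with `x`, simplifying multiple edges. -/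
def contractE [DecidableEq V] (G : SimpleGraph V) (x y : V) :
    SimpleGraph {v : V // v ≠ y} :=
  SimpleGraph.fromRel (fun a b =>
    G.Adj a.1 b.1 ∨ (a.1 = x ∧ G.Adj y b.1) ∨ (b.1 = x ∧ G.Adj y a.1))

/-- The (outer) neighborhood of a vertex set `A`. -/
def gBoundary (G : SimpleGraph V) (A : Set V) : Set V :=
  {v | v ∉ A ∧ ∃ a ∈ A, G.Adj v a}

/-- `S` separates `G`: the rest of the graph splits into two nonempty parts
with no edges between them. -/
def Separates (G : SimpleGraph V) (S : Set V) : Prop :=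
  ∃ A B : Set V, A.Nonempty ∧ B.Nonempty ∧ Disjoint A B ∧ A ∪ B = Sᶜ ∧
    ∀ a ∈ A, ∀ b ∈ B, ¬ G.Adj a b

/-- `T` is a nontrivial 4-cut: `|T| = 4` and `G - T` splits into two parts,
each of size at least 2, with no edges between them. -/
def IsNontrivialFourCut (G : SimpleGraph V) (T : Set V) : Prop :=
  T.ncard = 4 ∧ ∃ A B : Set V, 2 ≤ A.ncard ∧ 2 ≤ B.ncard ∧ Disjoint A B ∧
    A ∪ B = Tᶜ ∧ ∀ a ∈ A, ∀ b ∈ B, ¬ G.Adj a b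

/-- `G` is quasi 5-connected: 4-connected without a nontrivial 4-cut. -/
def QuasiFiveConnected [Fintype V] (G : SimpleGraph V) : Prop :=
  IsKConnected 4 G ∧ ∀ T : Set V, ¬ IsNontrivialFourCut G T

/-- `G` is contraction critical quasi 5-connected. -/
def ContractionCriticalQuasiFive [Fintype V] [DecidableEq V] (G : SimpleGraph V) : Prop :=
  QuasiFiveConnected G ∧
    ∀ x y : V, G.Adj x y → ¬ QuasiFiveConnected (contractE G x y)

/-- `A` is a fragment of `G`: both `A` and its "far side" are nonempty and the
neighborhood of `A` is a smallest separating set. -/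
def IsFragment (G : SimpleGraph V) (A : Set V) : Prop :=
  A.Nonempty ∧ (Aᶜ \ gBoundary G A).Nonempty ∧
    ∀ S : Set V, Separates G S → (gBoundary G A).ncard ≤ S.ncard

/-- A nontrivial fragment: both sides have at least two vertices. -/
def IsNontrivialFragment (G : SimpleGraph V) (A : Set V) : Prop :=
  IsFragment G A ∧ 2 ≤ A.ncard ∧ 2 ≤ (Aᶜ \ gBoundary G A).ncard

/-- Degree sum at least 9 for every pair of vertices at distance one or two. -/
def DegSumNine (G : SimpleGraph V) : Prop :=
  ∀ u v : V, (G.dist u v = 1 ∨ G.dist u v = 2) →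
    9 ≤ (G.neighborSet u).ncard + (G.neighborSet v).ncard

open SimpleGraph Set

section AuxConn

variable {W : Type*}

/-- Separation data: two nonempty parts partitioning `Sᶜ` with no edges between. -/
def SepD (H : SimpleGraph W) (S A B : Set W) : Prop :=
  A.Nonempty ∧ B.Nonempty ∧ Disjoint A B ∧ A ∪ B = Sᶜ ∧ ∀ a ∈ A, ∀ b ∈ B, ¬ H.Adj a b

lemma sepD_walk {H : SimpleGraph W} {S A B : Set W} (hU : A ∪ B = Sᶜ)
    (hNE : ∀ a ∈ A, ∀ b ∈ B, ¬ H.Adj a b) :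
    ∀ {u v : ↥Sᶜ}, (H.induce Sᶜ).Walk u v → u.1 ∈ A → v.1 ∈ A := by
  intro u v p
  induction p with
  | nil => exact id
  | @cons u w v h p ih =>
    intro hu
    have hw : w.1 ∈ A ∪ B := by rw [hU]; exact w.2
    rcases hw with hw | hw
    · exact ih hw
    · exact absurd (show H.Adj u.1 w.1 from h) (hNE u.1 hu w.1 hw)

lemma not_connected_of_sepD {H : SimpleGraph W} {S A B : Set W} (h : SepD H S A B) :
    ¬ (H.induce Sᶜ).Connected := by
  obtain ⟨⟨a, ha⟩, ⟨b, hb⟩, hd, hU, hNE⟩ := h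
  intro hc
  have haS : a ∈ Sᶜ := by rw [← hU]; exact Or.inl ha
  have hbS : b ∈ Sᶜ := by rw [← hU]; exact Or.inr hb
  obtain ⟨p⟩ := hc.preconnected ⟨a, haS⟩ ⟨b, hbS⟩
  exact Set.disjoint_left.mp hd (sepD_walk hU hNE p ha) hb

lemma sepD_of_not_connected {H : SimpleGraph W} {S : Set W} (hne : Sᶜ.Nonempty)
    (h : ¬ (H.induce Sᶜ).Connected) : ∃ A B, SepD H S A B := by
  rw [connected_iff] at h
  push_neg at h
  have hnonempty : Nonempty ↥Sᶜ := hne.to_subtype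
  obtain ⟨u, v, huv⟩ : ∃ u v : ↥Sᶜ, ¬ (H.induce Sᶜ).Reachable u v := by
    by_contra hc
    push_neg at hc
    exact (h hc).false (Classical.choice hnonempty)
  refine ⟨{w | ∃ hw : w ∈ Sᶜ, (H.induce Sᶜ).Reachable u ⟨w, hw⟩},
    Sᶜ \ {w | ∃ hw : w ∈ Sᶜ, (H.induce Sᶜ).Reachable u ⟨w, hw⟩}, ?_, ?_, ?_, ?_, ?_⟩
  · exact ⟨u.1, u.2, Reachable.refl u⟩
  · exact ⟨v.1, v.2, fun ⟨hv, hr⟩ => huv hr⟩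
  · exact disjoint_sdiff_right
  · exact Set.union_diff_cancel (fun w hw => hw.1)
  · rintro a ⟨ha, hr⟩ b hb hadj
    exact hb.2 ⟨hb.1, hr.trans (Adj.reachable (show (H.induce Sᶜ).Adj ⟨a, ha⟩ ⟨b, hb.1⟩ from hadj))⟩

end AuxConn
section AuxContract

variable {V : Type*} [DecidableEq V]

lemma contractE_adj (G : SimpleGraph V) (x y : V) (a b : {v : V // v ≠ y}) :
    (contractE G x y).Adj a b ↔ a.1 ≠ b.1 ∧
      (G.Adj a.1 b.1 ∨ (a.1 = x ∧ G.Adj y b.1) ∨ (b.1 = x ∧ G.Adj y a.1)) := by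
  unfold contractE
  rw [SimpleGraph.fromRel_adj]
  constructor
  · rintro ⟨h1, h2⟩
    refine ⟨fun h => h1 (Subtype.ext h), ?_⟩
    rcases h2 with (h | h | h) | (h | h | h)
    · exact Or.inl h
    · exact Or.inr (Or.inl h)
    · exact Or.inr (Or.inr h)
    · exact Or.inl h.symm
    · exact Or.inr (Or.inr h)
    · exact Or.inr (Or.inl h)
  · rintro ⟨h1, h2⟩
    exact ⟨fun h => h1 (congrArg Subtype.val h), Or.inl h2⟩

lemma mem_val_image {y : V} (X : Set {v : V // v ≠ y}) (v : V) (hv : v ≠ y) :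
    v ∈ Subtype.val '' X ↔ (⟨v, hv⟩ : {v : V // v ≠ y}) ∈ X := by
  constructor
  · rintro ⟨u, hu, rfl⟩; exact hu
  · intro h; exact ⟨⟨v, hv⟩, h, rfl⟩

lemma not_mem_val_image {y : V} (X : Set {v : V // v ≠ y}) :
    y ∉ Subtype.val '' X := by
  rintro ⟨u, _, hu⟩; exact u.2 hu

lemma disjoint_val_image {y : V} {X Y : Set {v : V // v ≠ y}} (h : Disjoint X Y) :
    Disjoint (Subtype.val '' X) (Subtype.val '' Y) := by
  rw [Set.disjoint_left] at h ⊢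
  rintro v ⟨u, hu, rfl⟩ ⟨w, hw, hwv⟩
  exact h hu (by rwa [Subtype.val_injective hwv] at hw)

lemma disjoint_insert_left' {α : Type*} {a : α} {s t : Set α} (ha : a ∉ t)
    (h : Disjoint s t) : Disjoint (insert a s) t := by
  rw [Set.disjoint_left] at h ⊢
  rintro v (rfl | hv)
  · exact fun hvt => ha hvt
  · exact h hv

lemma lift_sepD (G : SimpleGraph V) (x x₄ : V) (hx : x ≠ x₄)
    {S' A' B' : Set {v : V // v ≠ x₄}}
    (h : SepD (contractE G x x₄) S' A' B') :
    ((⟨x, hx⟩ : {v : V // v ≠ x₄}) ∈ S' ∧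
      SepD G (insert x₄ (Subtype.val '' S')) (Subtype.val '' A') (Subtype.val '' B'))
    ∨ ((⟨x, hx⟩ : {v : V // v ≠ x₄}) ∈ A' ∧
      SepD G (Subtype.val '' S') (insert x₄ (Subtype.val '' A')) (Subtype.val '' B'))
    ∨ ((⟨x, hx⟩ : {v : V // v ≠ x₄}) ∈ B' ∧
      SepD G (Subtype.val '' S') (Subtype.val '' A') (insert x₄ (Subtype.val '' B'))) := by
  obtain ⟨hA', hB', hd', hU', hNE'⟩ := h
  have e1 : ∀ a ∈ A', ∀ b ∈ B', ¬ G.Adj a.1 b.1 := by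
    intro a ha b hb hadj
    exact hNE' a ha b hb ((contractE_adj G x x₄ a b).mpr ⟨hadj.ne, Or.inl hadj⟩)
  have hmemU : ∀ (v : {v : V // v ≠ x₄}), v ∈ A' ∨ v ∈ B' ↔ v ∉ S' := by
    intro v
    constructor
    · intro hv; have : v ∈ A' ∪ B' := hv; rw [hU'] at this; exact this
    · intro hv; have : v ∈ A' ∪ B' := by rw [hU']; exact hv
      exact this
  by_cases hS : (⟨x, hx⟩ : {v : V // v ≠ x₄}) ∈ S'
  · left
    refine ⟨hS, hA'.image _, hB'.image _, disjoint_val_image hd', ?_, ?_⟩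
    · ext v
      constructor
      · rintro (⟨u, hu, rfl⟩ | ⟨u, hu, rfl⟩) <;>
        · intro hmem
          rcases hmem with hmem | hmem
          · exact u.2 hmem
          · rw [mem_val_image S' u.1 u.2] at hmem
            first
            | exact (hmemU u).mp (Or.inl hu) hmem
            | exact (hmemU u).mp (Or.inr hu) hmem
      · intro hv
        simp only [Set.mem_compl_iff, Set.mem_insert_iff, not_or] at hv
        obtain ⟨hv4, hvS⟩ := hv
        rw [mem_val_image S' v hv4] at hvS
        have : (⟨v, hv4⟩ : {v : V // v ≠ x₄}) ∈ A' ∪ B' := by rw [hU']; exact hvS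
        rcases this with hm | hm
        · exact Or.inl ((mem_val_image A' v hv4).mpr hm)
        · exact Or.inr ((mem_val_image B' v hv4).mpr hm)
    · rintro a ⟨ua, hua, rfl⟩ b ⟨ub, hub, rfl⟩
      exact e1 ua hua ub hub
  · have hAB : (⟨x, hx⟩ : {v : V // v ≠ x₄}) ∈ A' ∨ (⟨x, hx⟩ : {v : V // v ≠ x₄}) ∈ B' := by
      by_contra hc
      push_neg at hc
      exact hS (by_contra fun hS' => (hmemU _ |>.mpr hS' |> fun h => h.elim (hc.1 ·) (hc.2 ·)))
    rcases hAB with hxa | hxb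
    · right; left
      refine ⟨hxa, ⟨x₄, Set.mem_insert x₄ (Subtype.val '' A')⟩, hB'.image _,
        disjoint_insert_left' (not_mem_val_image B') (disjoint_val_image hd'), ?_, ?_⟩
      · ext v
        constructor
        · rintro (hv | ⟨u, hu, rfl⟩)
          · rcases hv with rfl | ⟨u, hu, rfl⟩
            · exact not_mem_val_image S'
            · intro hmem
              rw [mem_val_image S' u.1 u.2] at hmem
              exact (hmemU u).mp (Or.inl hu) hmem
          · intro hmem
            rw [mem_val_image S' u.1 u.2] at hmem
            exact (hmemU u).mp (Or.inr hu) hmem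
        · intro hv
          by_cases hv4 : v = x₄
          · subst hv4
            exact Or.inl (Set.mem_insert _ _)
          · rw [Set.mem_compl_iff, mem_val_image S' v hv4] at hv
            have : (⟨v, hv4⟩ : {v : V // v ≠ x₄}) ∈ A' ∪ B' := by rw [hU']; exact hv
            rcases this with hm | hm
            · exact Or.inl (Set.mem_insert_of_mem _ ((mem_val_image A' v hv4).mpr hm))
            · exact Or.inr ((mem_val_image B' v hv4).mpr hm)
      · rintro a ha b ⟨ub, hub, rfl⟩ hadj
        rcases ha with h4 | ⟨ua, hua, rfl⟩
        · rw [h4] at hadj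
          have hxb : x ≠ ub.1 := by
            intro hxe
            have : (⟨x, hx⟩ : {v : V // v ≠ x₄}) = ub := Subtype.ext hxe
            exact Set.disjoint_left.mp hd' hxa (this ▸ hub)
          exact hNE' ⟨x, hx⟩ hxa ub hub
            ((contractE_adj G x x₄ ⟨x, hx⟩ ub).mpr ⟨hxb, Or.inr (Or.inl ⟨rfl, hadj⟩)⟩)
        · exact e1 ua hua ub hub hadj
    · right; right
      refine ⟨hxb, hA'.image _, ⟨x₄, Set.mem_insert x₄ (Subtype.val '' B')⟩, ?_, ?_, ?_⟩
      · exact (disjoint_insert_left' (not_mem_val_image A')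
          (disjoint_val_image hd').symm).symm
      · ext v
        constructor
        · rintro (⟨u, hu, rfl⟩ | hv)
          · intro hmem
            rw [mem_val_image S' u.1 u.2] at hmem
            exact (hmemU u).mp (Or.inl hu) hmem
          · rcases hv with rfl | ⟨u, hu, rfl⟩
            · exact not_mem_val_image S'
            · intro hmem
              rw [mem_val_image S' u.1 u.2] at hmem
              exact (hmemU u).mp (Or.inr hu) hmem
        · intro hv
          by_cases hv4 : v = x₄
          · subst hv4
            exact Or.inr (Set.mem_insert _ _)
          · rw [Set.mem_compl_iff, mem_val_image S' v hv4] at hv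
            have : (⟨v, hv4⟩ : {v : V // v ≠ x₄}) ∈ A' ∪ B' := by rw [hU']; exact hv
            rcases this with hm | hm
            · exact Or.inl ((mem_val_image A' v hv4).mpr hm)
            · exact Or.inr (Set.mem_insert_of_mem _ ((mem_val_image B' v hv4).mpr hm))
      · rintro a ⟨ua, hua, rfl⟩ b hb hadj
        rcases hb with h4 | ⟨ub, hub, rfl⟩
        · rw [h4] at hadj
          have hax : ua.1 ≠ x := by
            intro hxe
            have : ua = (⟨x, hx⟩ : {v : V // v ≠ x₄}) := Subtype.ext hxe
            exact Set.disjoint_left.mp hd' (this ▸ hua) hxb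
          exact hNE' ua hua ⟨x, hx⟩ hxb
            ((contractE_adj G x x₄ ua ⟨x, hx⟩).mpr ⟨hax, Or.inr (Or.inr ⟨rfl, hadj.symm⟩)⟩)
        · exact e1 ua hua ub hub hadj

end AuxContract
section MainAux

variable {V : Type*} [Fintype V] [DecidableEq V]

lemma ncard_compl_eq (s : Set V) : sᶜ.ncard = Fintype.card V - s.ncard := by
  have h := Set.ncard_add_ncard_compl s
  rw [Nat.card_eq_fintype_card] at h
  omega

lemma ncard_le_card (s : Set V) : s.ncard ≤ Fintype.card V := by
  have h := Set.ncard_add_ncard_compl s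
  rw [Nat.card_eq_fintype_card] at h
  omega

lemma sep_not_conn_contra (G : SimpleGraph V) (h4 : IsKConnected 4 G) {S A B : Set V}
    (hS : S.ncard < 4) (hsep : SepD G S A B) : False :=
  not_connected_of_sepD hsep (h4.2 S hS)

lemma keyCore (G : SimpleGraph V) (hG : QuasiFiveConnected G)
    (S C : Set V) (a x xj xk x₄ : V)
    (hNx : G.neighborSet x = {a, xj, xk, x₄})
    (hNa : G.neighborSet a = S)
    (hxS : x ∈ S) (hx4S : x₄ ∈ S) (hS4 : S.ncard = 4)
    (hjk : xj ≠ xk) (hj4 : xj ≠ x₄) (hk4 : xk ≠ x₄)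
    (haj : G.Adj a xj) (hak : G.Adj a xk)
    (hC : C.Nonempty) (haC : a ∉ C) (hU : {a} ∪ C = Sᶜ) : False := by
  have haS : a ∉ S := by
    rw [← hNa]
    exact fun h => G.irrefl h
  have hxj : xj ∈ S := by rw [← hNa]; exact haj
  have hxk : xk ∈ S := by rw [← hNa]; exact hak
  have hxad : ∀ v, v ∈ ({a, xj, xk, x₄} : Set V) → G.Adj x v := by
    intro v hv; rw [← hNx] at hv; exact hv
  have hxja : G.Adj x xj := hxad xj (by simp)
  have hxka : G.Adj x xk := hxad xk (by simp)
  have hx4a : G.Adj x x₄ := hxad x₄ (by simp)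
  have hxa : G.Adj x a := hxad a (by simp)
  have hxnj : x ≠ xj := hxja.ne
  have hxnk : x ≠ xk := hxka.ne
  have hxn4 : x ≠ x₄ := hx4a.ne
  have hsub : ({x, xj, xk, x₄} : Set V) ⊆ S := by
    intro v hv
    simp only [Set.mem_insert_iff, Set.mem_singleton_iff] at hv
    rcases hv with h|h|h|h <;> rw [h] <;> assumption
  have hcard4 : ({x, xj, xk, x₄} : Set V).ncard = 4 := by
    rw [Set.ncard_insert_of_notMem (by simp [hxnj, hxnk, hxn4]) (Set.toFinite _),
      Set.ncard_insert_of_notMem (by simp [hjk, hj4]) (Set.toFinite _),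
      Set.ncard_insert_of_notMem (by simp [hk4]) (Set.toFinite _),
      Set.ncard_singleton]
  have hSeq : ({x, xj, xk, x₄} : Set V) = S :=
    Set.eq_of_subset_of_ncard_le hsub (by rw [hS4, hcard4]) (Set.toFinite S)
  have hTS : ({xj, xk, x₄} : Set V) ⊆ S := by
    intro v hv; exact hsub (Set.mem_insert_of_mem _ hv)
  have hCS : C ⊆ Sᶜ := by
    intro c hc; rw [← hU]; exact Or.inr hc
  have hT3 : ({xj, xk, x₄} : Set V).ncard = 3 := by
    rw [Set.ncard_insert_of_notMem (by simp [hjk, hj4]) (Set.toFinite _),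
      Set.ncard_insert_of_notMem (by simp [hk4]) (Set.toFinite _),
      Set.ncard_singleton]
  apply sep_not_conn_contra G hG.1 (show ({xj, xk, x₄} : Set V).ncard < 4 by omega)
    (A := {x, a}) (B := C)
  refine ⟨⟨x, Set.mem_insert x {a}⟩, hC, ?_, ?_, ?_⟩
  · rw [Set.disjoint_left]
    rintro v hv hvC
    have hvS : v ∈ Sᶜ := hCS hvC
    rcases hv with h | h
    · rw [h] at hvS; exact hvS hxS
    · rw [Set.mem_singleton_iff.mp h] at hvC; exact haC hvC
  · ext v
    constructor
    · rintro (h | hvC)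
      · rcases h with h | h
        · subst h
          intro hv
          simp only [Set.mem_insert_iff, Set.mem_singleton_iff] at hv
          rcases hv with h|h|h
          · exact hxnj h
          · exact hxnk h
          · exact hxn4 h
        · rw [Set.mem_singleton_iff.mp h]
          intro hv
          exact haS (hTS hv)
      · intro hv
        exact (hCS hvC) (hTS hv)
    · intro hv
      by_cases hvx : v = x
      · exact Or.inl (Or.inl hvx)
      · by_cases hva : v = a
        · exact Or.inl (Or.inr hva)
        · have hvS : v ∉ S := by
            rw [← hSeq]
            intro hm
            rcases hm with h | h
            · exact hvx h
            · exact hv h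
          have : v ∈ ({a} : Set V) ∪ C := by rw [hU]; exact hvS
          rcases this with h | h
          · exact absurd (Set.mem_singleton_iff.mp h) hva
          · exact Or.inr h
  · rintro u hu c hc hadj
    have hcS : c ∈ Sᶜ := hCS hc
    rcases hu with h | h
    · rw [h] at hadj
      have : c ∈ ({a, xj, xk, x₄} : Set V) := by rw [← hNx]; exact hadj
      rcases this with h' | h'
      · rw [Set.mem_singleton_iff.mp (Set.mem_singleton_iff.mpr h')] at hc
        exact haC hc
      · exact hcS (hTS h')
    · rw [Set.mem_singleton_iff.mp h] at hadj
      have : c ∈ S := by rw [← hNa]; exact hadj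
      exact hcS this

end MainAux
section MainAux2

variable {V : Type*} [Fintype V] [DecidableEq V]

lemma keyLemma (G : SimpleGraph V) (hG : QuasiFiveConnected G)
    (hcard : 8 ≤ Fintype.card V) (x x₁ x₂ x₃ x₄ : V)
    (hne : [x₁, x₂, x₃, x₄].Pairwise (· ≠ ·))
    (hN : G.neighborSet x = {x₁, x₂, x₃, x₄})
    (h12 : G.Adj x₁ x₂) (h13 : G.Adj x₁ x₃) (h23 : G.Adj x₂ x₃)
    (S C : Set V) (a : V) (hxS : x ∈ S) (hx4S : x₄ ∈ S) (hS4 : S.ncard = 4)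
    (hC : C.Nonempty) (haC : a ∉ C) (hU : {a} ∪ C = Sᶜ)
    (hNE : ∀ c ∈ C, ¬ G.Adj a c) : False := by
  obtain ⟨p1, hne⟩ := List.pairwise_cons.mp hne
  obtain ⟨p2, hne⟩ := List.pairwise_cons.mp hne
  obtain ⟨p3, _⟩ := List.pairwise_cons.mp hne
  have n13 : x₁ ≠ x₃ := p1 x₃ (by simp)
  have n14 : x₁ ≠ x₄ := p1 x₄ (by simp)
  have n23 : x₂ ≠ x₃ := p2 x₃ (by simp)
  have n24 : x₂ ≠ x₄ := p2 x₄ (by simp)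
  have n34 : x₃ ≠ x₄ := p3 x₄ (by simp)
  have n12 : x₁ ≠ x₂ := p1 x₂ (by simp)
  have haS : a ∉ S := by
    intro h
    have : a ∈ Sᶜ := by rw [← hU]; exact Or.inl rfl
    exact this h
  have hNaS : G.neighborSet a ⊆ S := by
    intro n hn
    by_contra hnS
    have hm : n ∈ ({a} : Set V) ∪ C := by rw [hU]; exact hnS
    rcases hm with h | h
    · rw [Set.mem_singleton_iff.mp h] at hn
      exact G.irrefl hn
    · exact hNE n h hn
  have hdeg : (G.neighborSet a).ncard = 4 := by
    have hle : (G.neighborSet a).ncard ≤ 4 := by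
      rw [← hS4]; exact Set.ncard_le_ncard hNaS (Set.toFinite S)
    by_contra hne4
    apply sep_not_conn_contra G hG.1
      (show (G.neighborSet a).ncard < 4 from lt_of_le_of_ne hle hne4)
      (A := {a}) (B := (G.neighborSet a)ᶜ \ {a})
    have haN : a ∈ (G.neighborSet a)ᶜ := fun h => G.irrefl h
    refine ⟨⟨a, rfl⟩, ?_, disjoint_sdiff_right,
      Set.union_diff_cancel (by intro v hv; rw [Set.mem_singleton_iff.mp hv]; exact haN), ?_⟩
    · apply Set.nonempty_of_ncard_ne_zero
      rw [Set.ncard_diff_singleton_of_mem haN, ncard_compl_eq]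
      omega
    · rintro u hu b hb hadj
      rw [Set.mem_singleton_iff.mp hu] at hadj
      exact hb.1 hadj
  have hNaeq : G.neighborSet a = S :=
    Set.eq_of_subset_of_ncard_le hNaS (by omega) (Set.toFinite S)
  have hax : G.Adj a x := by
    have : x ∈ G.neighborSet a := by rw [hNaeq]; exact hxS
    exact this
  have haNx : a ∈ ({x₁, x₂, x₃, x₄} : Set V) := by rw [← hN]; exact hax.symm
  have ha4 : a ≠ x₄ := fun h => haS (h ▸ hx4S)
  simp only [Set.mem_insert_iff, Set.mem_singleton_iff] at haNx
  rcases haNx with h | h | h | h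
  · refine keyCore G hG S C a x x₂ x₃ x₄ ?_ hNaeq hxS hx4S hS4 n23 n24 n34 ?_ ?_ hC haC hU
    · rw [hN, h]
    · rw [h]; exact h12
    · rw [h]; exact h13
  · refine keyCore G hG S C a x x₁ x₃ x₄ ?_ hNaeq hxS hx4S hS4 n13 n14 n34 ?_ ?_ hC haC hU
    · rw [hN, h]
      ext v
      simp only [Set.mem_insert_iff, Set.mem_singleton_iff]
      tauto
    · rw [h]; exact h12.symm
    · rw [h]; exact h23
  · refine keyCore G hG S C a x x₁ x₂ x₄ ?_ hNaeq hxS hx4S hS4 n12 n14 n24 ?_ ?_ hC haC hU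
    · rw [hN, h]
      ext v
      simp only [Set.mem_insert_iff, Set.mem_singleton_iff]
      tauto
    · rw [h]; exact h13.symm
    · rw [h]; exact h23.symm
  · exact ha4 h

lemma shrink (G : SimpleGraph V) (hG : QuasiFiveConnected G) (T A B : Set V) (x : V)
    (hxT : x ∈ T) (hT5 : T.ncard = 5) (hA : 2 ≤ A.ncard) (hB : 2 ≤ B.ncard)
    (hd : Disjoint A B) (hU : A ∪ B = Tᶜ)
    (hNE : ∀ a ∈ A, ∀ b ∈ B, ¬ G.Adj a b) (hx : ∀ b ∈ B, ¬ G.Adj x b) : False := by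
  apply hG.2 (T \ {x})
  have hxB : x ∉ B := by
    intro h
    have : x ∈ Tᶜ := by rw [← hU]; exact Or.inr h
    exact this hxT
  have hxA : x ∉ A := by
    intro h
    have : x ∈ Tᶜ := by rw [← hU]; exact Or.inl h
    exact this hxT
  refine ⟨by rw [Set.ncard_diff_singleton_of_mem hxT, hT5],
    insert x A, B, ?_, hB, disjoint_insert_left' hxB hd, ?_, ?_⟩
  · exact le_trans hA (Set.ncard_le_ncard (Set.subset_insert _ _) (Set.toFinite _))
  · ext v
    constructor
    · rintro (h | hv)
      · rcases h with h | h
        · intro hm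
          exact hm.2 h
        · intro hm
          have : v ∈ Tᶜ := by rw [← hU]; exact Or.inl h
          exact this hm.1
      · intro hm
        have : v ∈ Tᶜ := by rw [← hU]; exact Or.inr hv
        exact this hm.1
    · intro hv
      by_cases hvx : v = x
      · exact Or.inl (Or.inl hvx)
      · have hvT : v ∉ T := by
          intro h
          exact hv ⟨h, hvx⟩
        have : v ∈ A ∪ B := by rw [hU]; exact hvT
        rcases this with h | h
        · exact Or.inl (Or.inr h)
        · exact Or.inr h
  · rintro u hu b hb hadj
    rcases hu with h | h
    · rw [h] at hadj
      exact hx b hb hadj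
    · exact hNE u h b hb hadj

end MainAux2

/-- In a quasi 5-connected graph on at least 8 vertices, if a
degree-4 vertex `x` has neighbors `x₁, x₂, x₃, x₄` with `{x₁, x₂, x₃}` inducing
a triangle, then `x x₄` is quasi 5-contractible. -/
theorem stmt4 {V : Type*} [Fintype V] [DecidableEq V] (G : SimpleGraph V)
    (hG : QuasiFiveConnected G) (hcard : 8 ≤ Fintype.card V)
    (x x₁ x₂ x₃ x₄ : V)
    (hne : [x₁, x₂, x₃, x₄].Pairwise (· ≠ ·))
    (hN : G.neighborSet x = {x₁, x₂, x₃, x₄})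
    (h12 : G.Adj x₁ x₂) (h13 : G.Adj x₁ x₃) (h23 : G.Adj x₂ x₃) :
    QuasiFiveConnected (contractE G x x₄) := by
  have hxx4 : G.Adj x x₄ := by
    have : x₄ ∈ G.neighborSet x := by rw [hN]; simp
    exact this
  have hx : x ≠ x₄ := hxx4.ne
  have hcW : Fintype.card {v : V // v ≠ x₄} = Fintype.card V - 1 := by
    rw [Fintype.card_subtype_compl, Fintype.card_subtype_eq]
  have imgcard : ∀ X : Set {v : V // v ≠ x₄}, (Subtype.val '' X).ncard = X.ncard :=
    fun X => Set.ncard_image_of_injective X Subtype.val_injective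
  constructor
  · constructor
    · rw [hcW]; omega
    · intro S' hS'
      by_contra hnc
      have hne' : (S'ᶜ).Nonempty := by
        apply Set.nonempty_of_ncard_ne_zero
        rw [ncard_compl_eq, hcW]
        omega
      obtain ⟨A', B', hsep⟩ := sepD_of_not_connected hne' hnc
      rcases lift_sepD G x x₄ hx hsep with ⟨hxS, hsd⟩ | ⟨hxA, hsd⟩ | ⟨hxB, hsd⟩
      · have hSn : (insert x₄ (Subtype.val '' S')).ncard = S'.ncard + 1 := by
          rw [Set.ncard_insert_of_notMem (not_mem_val_image S') (Set.toFinite _), imgcard]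
        by_cases h4 : (insert x₄ (Subtype.val '' S')).ncard < 4
        · exact sep_not_conn_contra G hG.1 h4 hsd
        · have hS4 : (insert x₄ (Subtype.val '' S')).ncard = 4 := by omega
          obtain ⟨hAne, hBne, hd, hU, hNEg⟩ := hsd
          have hsmall : (Subtype.val '' A').ncard ≤ 1 ∨ (Subtype.val '' B').ncard ≤ 1 := by
            by_contra hcc
            push_neg at hcc
            exact hG.2 _ ⟨hS4, _, _, hcc.1, hcc.2, hd, hU, hNEg⟩
          have hxSm : x ∈ insert x₄ (Subtype.val '' S') :=
            Set.mem_insert_of_mem _ ((mem_val_image S' x hx).mpr hxS)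
          have hx4Sm : x₄ ∈ insert x₄ (Subtype.val '' S') := Set.mem_insert _ _
          rcases hsmall with hsm | hsm
          · have h1 : (Subtype.val '' A').ncard = 1 :=
              le_antisymm hsm ((Set.ncard_pos (Set.toFinite _)).mpr hAne)
            obtain ⟨a, hA1⟩ := Set.ncard_eq_one.mp h1
            have haA : a ∈ Subtype.val '' A' := by rw [hA1]; exact rfl
            refine keyLemma G hG hcard x x₁ x₂ x₃ x₄ hne hN h12 h13 h23 _
              (Subtype.val '' B') a hxSm hx4Sm hS4 hBne ?_ ?_ ?_
            · exact Set.disjoint_left.mp hd haA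
            · rw [← hA1]; exact hU
            · intro c hc; exact hNEg a haA c hc
          · have h1 : (Subtype.val '' B').ncard = 1 :=
              le_antisymm hsm ((Set.ncard_pos (Set.toFinite _)).mpr hBne)
            obtain ⟨b, hB1⟩ := Set.ncard_eq_one.mp h1
            have hbB : b ∈ Subtype.val '' B' := by rw [hB1]; exact rfl
            refine keyLemma G hG hcard x x₁ x₂ x₃ x₄ hne hN h12 h13 h23 _
              (Subtype.val '' A') b hxSm hx4Sm hS4 hAne ?_ ?_ ?_
            · exact fun h => Set.disjoint_left.mp hd h hbB
            · rw [Set.union_comm, ← hB1]; exact hU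
            · intro c hc hadj; exact hNEg c hc b hbB hadj.symm
      · exact sep_not_conn_contra G hG.1 (by rw [imgcard]; exact hS') hsd
      · exact sep_not_conn_contra G hG.1 (by rw [imgcard]; exact hS') hsd
  · intro T' hcut
    obtain ⟨hT4, A', B', hA2, hB2, hd', hU', hNE'⟩ := hcut
    have hApos : A'.Nonempty := Set.nonempty_of_ncard_ne_zero (by omega)
    have hBpos : B'.Nonempty := Set.nonempty_of_ncard_ne_zero (by omega)
    rcases lift_sepD G x x₄ hx ⟨hApos, hBpos, hd', hU', hNE'⟩ with
      ⟨hxT, hsd⟩ | ⟨hxA, hsd⟩ | ⟨hxB, hsd⟩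
    · obtain ⟨hAne, hBne, hd, hU, hNEg⟩ := hsd
      have hT5 : (insert x₄ (Subtype.val '' T')).ncard = 5 := by
        rw [Set.ncard_insert_of_notMem (not_mem_val_image T') (Set.toFinite _), imgcard, hT4]
      have hxT' : x ∈ insert x₄ (Subtype.val '' T') :=
        Set.mem_insert_of_mem _ ((mem_val_image T' x hx).mpr hxT)
      have hA2' : 2 ≤ (Subtype.val '' A').ncard := by rw [imgcard]; exact hA2
      have hB2' : 2 ≤ (Subtype.val '' B').ncard := by rw [imgcard]; exact hB2
      have htri : ∀ u v : V, u ∈ ({x₁, x₂, x₃} : Set V) → v ∈ ({x₁, x₂, x₃} : Set V) →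
          u ≠ v → G.Adj u v := by
        intro u v hu hv huv
        simp only [Set.mem_insert_iff, Set.mem_singleton_iff] at hu hv
        rcases hu with h|h|h <;> rcases hv with h'|h'|h' <;> rw [h, h'] <;>
          first
          | exact absurd (h.trans h'.symm) huv
          | exact h12
          | exact h13
          | exact h23
          | exact h12.symm
          | exact h13.symm
          | exact h23.symm
      have hdich : (∀ b ∈ Subtype.val '' B', ¬ G.Adj x b) ∨
          (∀ a ∈ Subtype.val '' A', ¬ G.Adj x a) := by
        by_contra hc
        push_neg at hc
        obtain ⟨⟨b, hbB, hxb⟩, ⟨a, haA, hxa⟩⟩ := hc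
        have hbN : b ∈ ({x₁, x₂, x₃, x₄} : Set V) := by rw [← hN]; exact hxb
        have haN : a ∈ ({x₁, x₂, x₃, x₄} : Set V) := by rw [← hN]; exact hxa
        have hb4 : b ≠ x₄ := by obtain ⟨ub, _, rfl⟩ := hbB; exact ub.2
        have ha4 : a ≠ x₄ := by obtain ⟨ua, _, rfl⟩ := haA; exact ua.2
        simp only [Set.mem_insert_iff, Set.mem_singleton_iff] at hbN haN
        have hb3 : b ∈ ({x₁, x₂, x₃} : Set V) := by
          rcases hbN with h|h|h|h
          · exact Or.inl h
          · exact Or.inr (Or.inl h)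
          · exact Or.inr (Or.inr h)
          · exact absurd h hb4
        have ha3 : a ∈ ({x₁, x₂, x₃} : Set V) := by
          rcases haN with h|h|h|h
          · exact Or.inl h
          · exact Or.inr (Or.inl h)
          · exact Or.inr (Or.inr h)
          · exact absurd h ha4
        have hab : a ≠ b := by
          rintro rfl
          exact Set.disjoint_left.mp hd haA hbB
        exact hNEg a haA b hbB (htri a b ha3 hb3 hab)
      rcases hdich with h | h
      · exact shrink G hG _ (Subtype.val '' A') (Subtype.val '' B') x hxT' hT5 hA2' hB2'
          hd hU hNEg h
      · exact shrink G hG _ (Subtype.val '' B') (Subtype.val '' A') x hxT' hT5 hB2' hA2'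
          hd.symm (by rw [Set.union_comm]; exact hU)
          (fun b hb a ha hadj => hNEg a ha b hb hadj.symm) h
    · obtain ⟨hAne, hBne, hd, hU, hNEg⟩ := hsd
      exact hG.2 (Subtype.val '' T') ⟨by rw [imgcard]; exact hT4,
        insert x₄ (Subtype.val '' A'), Subtype.val '' B',
        le_trans (by rw [imgcard]; exact hA2)
          (Set.ncard_le_ncard (Set.subset_insert _ _) (Set.toFinite _)),
        by rw [imgcard]; exact hB2, hd, hU, hNEg⟩
    · obtain ⟨hAne, hBne, hd, hU, hNEg⟩ := hsd
      exact hG.2 (Subtype.val '' T') ⟨by rw [imgcard]; exact hT4,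
        Subtype.val '' A', insert x₄ (Subtype.val '' B'),
        by rw [imgcard]; exact hA2,
        le_trans (by rw [imgcard]; exact hB2)
          (Set.ncard_le_ncard (Set.subset_insert _ _) (Set.toFinite _)),
        hd, hU, hNEg⟩
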